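/- For every real c > 0, the sequence of functions x ↦ (1/n) · F_n''(x) converges to 0 uniformly on the half-line [c, ∞) as n → ∞, where F_n'' is the second derivative of F_n(x) = log(∑_{j=0}^n e^{jx}). -/

import Mathlib

open Filter Finset Real

private lemma hasDerivAt_S (n : ℕ) (x : ℝ) :
    HasDerivAt (fun y : ℝ => ∑ j ∈ Finset.range (n + 1), Real.exp (j * y))
      (∑ j ∈ Finset.range (n + 1), (j : ℝ) * Real.exp (j * x)) x := by
  apply HasDerivAt.fun_sum
  intro j _
  have h1 : HasDerivAt (fun y : ℝ => (j : ℝ) * y) (j : ℝ) x := by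
    simpa using (hasDerivAt_id x).const_mul (j : ℝ)
  simpa [mul_comm] using h1.exp

private lemma hasDerivAt_T (n : ℕ) (x : ℝ) :
    HasDerivAt (fun y : ℝ => ∑ j ∈ Finset.range (n + 1), (j : ℝ) * Real.exp (j * y))
      (∑ j ∈ Finset.range (n + 1), (j : ℝ) ^ 2 * Real.exp (j * x)) x := by
  apply HasDerivAt.fun_sum
  intro j _
  have h1 : HasDerivAt (fun y : ℝ => (j : ℝ) * y) (j : ℝ) x := by
    simpa using (hasDerivAt_id x).const_mul (j : ℝ)
  have := h1.exp.const_mul (j : ℝ)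
  convert this using 1
  rfl
  ring

private lemma S_pos (n : ℕ) (y : ℝ) :
    0 < ∑ j ∈ Finset.range (n + 1), Real.exp (j * y) :=
  Finset.sum_pos (fun j _ => Real.exp_pos _) ⟨0, Finset.mem_range.2 (Nat.succ_pos n)⟩

private lemma second_deriv_eq (n : ℕ) (x : ℝ) :
    deriv (deriv (fun y : ℝ =>
        Real.log (∑ j ∈ Finset.range (n + 1), Real.exp (j * y)))) x
      = ((∑ j ∈ Finset.range (n + 1), (j : ℝ) ^ 2 * Real.exp (j * x)) *
            (∑ j ∈ Finset.range (n + 1), Real.exp (j * x))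
          - (∑ j ∈ Finset.range (n + 1), (j : ℝ) * Real.exp (j * x)) ^ 2)
        / (∑ j ∈ Finset.range (n + 1), Real.exp (j * x)) ^ 2 := by
  have hd1 : deriv (fun y : ℝ =>
      Real.log (∑ j ∈ Finset.range (n + 1), Real.exp (j * y)))
      = fun y => (∑ j ∈ Finset.range (n + 1), (j : ℝ) * Real.exp (j * y)) /
          (∑ j ∈ Finset.range (n + 1), Real.exp (j * y)) := by
    funext y
    exact ((hasDerivAt_S n y).log (S_pos n y).ne').deriv
  rw [hd1, ((hasDerivAt_T n x).fun_div (hasDerivAt_S n x) (S_pos n x).ne').deriv]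
  ring

private lemma second_deriv_nonneg (n : ℕ) (x : ℝ) :
    0 ≤ ((∑ j ∈ Finset.range (n + 1), (j : ℝ) ^ 2 * Real.exp (j * x)) *
            (∑ j ∈ Finset.range (n + 1), Real.exp (j * x))
          - (∑ j ∈ Finset.range (n + 1), (j : ℝ) * Real.exp (j * x)) ^ 2)
        / (∑ j ∈ Finset.range (n + 1), Real.exp (j * x)) ^ 2 := by
  apply div_nonneg _ (sq_nonneg _)
  rw [sub_nonneg]
  have := Finset.sum_mul_sq_le_sq_mul_sq (Finset.range (n + 1))
    (fun j => Real.exp (j * x / 2)) (fun j => (j : ℝ) * Real.exp (j * x / 2))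
  have e1 : ∀ j : ℕ, Real.exp (j * x / 2) * ((j : ℝ) * Real.exp (j * x / 2))
      = (j : ℝ) * Real.exp (j * x) := by
    intro j
    rw [mul_left_comm, ← Real.exp_add, add_halves]
  have e2 : ∀ j : ℕ, Real.exp (j * x / 2) ^ 2 = Real.exp (j * x) := by
    intro j
    rw [sq, ← Real.exp_add, add_halves]
  have e3 : ∀ j : ℕ, ((j : ℝ) * Real.exp (j * x / 2)) ^ 2
      = (j : ℝ) ^ 2 * Real.exp (j * x) := by
    intro j
    rw [mul_pow, e2]
  simp only [e1, e2, e3] at this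
  calc (∑ j ∈ Finset.range (n + 1), (j : ℝ) * Real.exp (j * x)) ^ 2
      ≤ (∑ j ∈ Finset.range (n + 1), Real.exp (j * x)) *
          ∑ j ∈ Finset.range (n + 1), (j : ℝ) ^ 2 * Real.exp (j * x) := this
    _ = _ := by ring

private lemma second_deriv_le (n : ℕ) {c x : ℝ} (hc : 0 < c) (hx : c ≤ x) :
    ((∑ j ∈ Finset.range (n + 1), (j : ℝ) ^ 2 * Real.exp (j * x)) *
            (∑ j ∈ Finset.range (n + 1), Real.exp (j * x))
          - (∑ j ∈ Finset.range (n + 1), (j : ℝ) * Real.exp (j * x)) ^ 2)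
        / (∑ j ∈ Finset.range (n + 1), Real.exp (j * x)) ^ 2
      ≤ ∑ k ∈ Finset.range (n + 1), (k : ℝ) ^ 2 * Real.exp (-c) ^ k := by
  set S := ∑ j ∈ Finset.range (n + 1), Real.exp (j * x) with hS
  set T := ∑ j ∈ Finset.range (n + 1), (j : ℝ) * Real.exp (j * x) with hT
  set U := ∑ j ∈ Finset.range (n + 1), (j : ℝ) ^ 2 * Real.exp (j * x) with hU
  have hSpos : 0 < S := S_pos n x
  set A := ∑ j ∈ Finset.range (n + 1), ((n : ℝ) - j) ^ 2 * Real.exp (j * x) with hAdef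
  have hA : A = (n : ℝ) ^ 2 * S - 2 * n * T + U := by
    rw [hAdef, hS, hT, hU, Finset.mul_sum, Finset.mul_sum, ← Finset.sum_sub_distrib,
      ← Finset.sum_add_distrib]
    apply Finset.sum_congr rfl
    intro j _
    ring
  have step1 : (U * S - T ^ 2) / S ^ 2 ≤ A / S := by
    have key : A / S - (U * S - T ^ 2) / S ^ 2 = (((n : ℝ) * S - T) / S) ^ 2 := by
      rw [hA]
      field_simp
      ring
    nlinarith [sq_nonneg (((n : ℝ) * S - T) / S)]
  have hA0 : 0 ≤ A := Finset.sum_nonneg fun j _ => by positivity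
  have hSn : Real.exp (n * x) ≤ S :=
    Finset.single_le_sum (f := fun j : ℕ => Real.exp (j * x))
      (fun j _ => (Real.exp_pos _).le) (Finset.self_mem_range_succ n)
  have step2 : A / S ≤ A / Real.exp (n * x) :=
    div_le_div_of_nonneg_left hA0 (Real.exp_pos _) hSn
  have step3 : A / Real.exp (n * x)
      ≤ ∑ j ∈ Finset.range (n + 1), ((n - j : ℕ) : ℝ) ^ 2 * Real.exp (-c) ^ (n - j) := by
    rw [hAdef, Finset.sum_div]
    apply Finset.sum_le_sum
    intro j hj
    have hjn : j ≤ n := Nat.lt_succ_iff.mp (Finset.mem_range.mp hj)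
    have hcast : (n : ℝ) - j = ((n - j : ℕ) : ℝ) := by
      push_cast [Nat.cast_sub hjn]
      ring
    set k : ℕ := n - j with hk
    have hterm : Real.exp (j * x) / Real.exp (n * x) = Real.exp (-(k * x)) := by
      rw [← Real.exp_sub]
      congr 1
      rw [hk]
      push_cast [Nat.cast_sub hjn]
      ring
    rw [mul_div_assoc, hterm, hcast]
    apply mul_le_mul_of_nonneg_left _ (sq_nonneg _)
    have : Real.exp (-(k * x)) ≤ Real.exp (-(k * c)) := by
      apply Real.exp_le_exp.2
      simp only [neg_le_neg_iff]
      exact mul_le_mul_of_nonneg_left hx (Nat.cast_nonneg k)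
    calc Real.exp (-(k * x)) ≤ Real.exp (-(k * c)) := this
      _ = Real.exp (-c) ^ k := by
          rw [← Real.exp_nat_mul]
          ring_nf
  have step4 : ∑ j ∈ Finset.range (n + 1), ((n - j : ℕ) : ℝ) ^ 2 * Real.exp (-c) ^ (n - j)
      = ∑ k ∈ Finset.range (n + 1), (k : ℝ) ^ 2 * Real.exp (-c) ^ k := by
    simpa using Finset.sum_range_reflect (fun k => (k : ℝ) ^ 2 * Real.exp (-c) ^ k) (n + 1)
  linarith

/-- For every real `c > 0`, the functions `x ↦ (1/n) · F_n''(x)` converge to `0` uniformly on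
`[c, ∞)` as `n → ∞`, where `F_n(x) = log (∑_{j=0}^n e^{jx})`. -/
theorem tendstoUniformlyOn_second_deriv_log_sum_exp_Ici (c : ℝ) (hc : 0 < c) :
    TendstoUniformlyOn
      (fun (n : ℕ) (x : ℝ) =>
        (1 / (n : ℝ)) *
          deriv (deriv (fun y : ℝ =>
            Real.log (∑ j ∈ Finset.range (n + 1), Real.exp (j * y)))) x)
      (fun _ => 0) atTop (Set.Ici c) := by
  rw [Metric.tendstoUniformlyOn_iff]
  intro ε hε
  set r := Real.exp (-c) with hrdef
  have hr0 : 0 ≤ r := (Real.exp_pos _).le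
  have hr1 : r < 1 := by
    rw [hrdef]
    exact Real.exp_lt_one_iff.mpr (neg_neg_iff_pos.mpr hc)
  have hsum : Summable (fun k : ℕ => (k : ℝ) ^ 2 * r ^ k) := by
    have := summable_pow_mul_geometric_of_norm_lt_one (R := ℝ) 2
      (r := r) (by rwa [Real.norm_eq_abs, abs_of_nonneg hr0])
    exact this
  set M := ∑' k : ℕ, (k : ℝ) ^ 2 * r ^ k with hM
  have hM0 : 0 ≤ M := tsum_nonneg fun k => by positivity
  have hbound : ∀ n : ℕ, ∑ k ∈ Finset.range (n + 1), (k : ℝ) ^ 2 * r ^ k ≤ M :=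
    fun n => Summable.sum_le_tsum _ (fun k _ => by positivity) hsum
  have hlim : Tendsto (fun n : ℕ => M / n) atTop (nhds 0) :=
    tendsto_const_div_atTop_nhds_zero_nat M
  have hev : ∀ᶠ n : ℕ in atTop, M / n < ε :=
    hlim.eventually (Filter.eventually_iff_exists_mem.mpr ⟨Set.Iio ε, Iio_mem_nhds hε, fun y hy => hy⟩)
  filter_upwards [hev] with n hn x hx
  rw [Real.dist_eq, second_deriv_eq]
  have h0 := second_deriv_nonneg n x
  have h1 := (second_deriv_le n hc hx).trans (hbound n)
  have hn0 : (0 : ℝ) ≤ 1 / (n : ℝ) := by positivity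
  have hle : (1 / (n : ℝ)) *
      (((∑ j ∈ Finset.range (n + 1), (j : ℝ) ^ 2 * Real.exp (j * x)) *
            (∑ j ∈ Finset.range (n + 1), Real.exp (j * x))
          - (∑ j ∈ Finset.range (n + 1), (j : ℝ) * Real.exp (j * x)) ^ 2)
        / (∑ j ∈ Finset.range (n + 1), Real.exp (j * x)) ^ 2) ≤ M / n := by
    calc _ ≤ (1 / (n : ℝ)) * M := mul_le_mul_of_nonneg_left h1 hn0
      _ = M / n := one_div_mul_eq_div _ _
  have hpos : 0 ≤ (1 / (n : ℝ)) *
      (((∑ j ∈ Finset.range (n + 1), (j : ℝ) ^ 2 * Real.exp (j * x)) *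
            (∑ j ∈ Finset.range (n + 1), Real.exp (j * x))
          - (∑ j ∈ Finset.range (n + 1), (j : ℝ) * Real.exp (j * x)) ^ 2)
        / (∑ j ∈ Finset.range (n + 1), Real.exp (j * x)) ^ 2) :=
    mul_nonneg hn0 h0
  rw [zero_sub, abs_neg, abs_of_nonneg hpos]
  exact lt_of_le_of_lt hle hn
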